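/- Let ζ_t be a primitive t-th root of unity in L with t | p^n + 1 and t > 1. Then W_{L,s}(ζ_t) = p^n(d_1 δ_{1,t} + d_2 δ_{2,t} - 1), where δ_{i,t} = 1 if t divides (p^n+1)/d_i and 0 otherwise. -/

import Mathlib

open scoped BigOperators

/-- The Weil sum `W_{F,s}(a) = ∑_{x ∈ F} μ(x^s - a x)`, where `μ` is the canonical
additive character `μ(x) = ζ_p^{Tr_{F/𝔽_p}(x)}` of the finite field `F`. -/
noncomputable def weilSum (p : ℕ) (F : Type) [Field F] [Fintype F]
    [Algebra (ZMod p) F] (s : ℕ) (a : F) : ℂ :=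
  ∑ x : F, Complex.exp (2 * Real.pi * Complex.I *
    ((Algebra.trace (ZMod p) F (x ^ s - a * x)).val : ℂ) / (p : ℂ))


open scoped BigOperators
open Finset Polynomial

namespace WeilAux

noncomputable def mu (p : ℕ) [NeZero p] (L : Type) [Field L] [Fintype L]
    [Algebra (ZMod p) L] : AddChar L ℂ :=
  (ZMod.stdAddChar (N := p)).compAddMonoidHom (Algebra.trace (ZMod p) L).toAddMonoidHom

section basic
variable (p : ℕ) [Fact p.Prime] (L : Type) [Field L] [Fintype L] [Algebra (ZMod p) L]

lemma mu_apply (x : L) : mu p L x = Complex.exp (2 * Real.pi * Complex.I *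
    ((Algebra.trace (ZMod p) L x).val : ℂ) / (p : ℂ)) := by
  have : mu p L x = ZMod.stdAddChar (Algebra.trace (ZMod p) L x) := rfl
  rw [this, ZMod.stdAddChar_apply, ZMod.toCircle_apply]

lemma mu_eq_one_iff (x : L) : mu p L x = 1 ↔ Algebra.trace (ZMod p) L x = 0 := by
  constructor
  · intro h
    have : ZMod.stdAddChar (Algebra.trace (ZMod p) L x) = ZMod.stdAddChar (0 : ZMod p) := by
      rw [AddChar.map_zero_eq_one]; exact h
    exact ZMod.injective_stdAddChar this
  · intro h
    have : mu p L x = ZMod.stdAddChar (Algebra.trace (ZMod p) L x) := rfl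
    rw [this, h, AddChar.map_zero_eq_one]

lemma exists_mu_ne_one : ∃ z : L, mu p L z ≠ 1 := by
  have h := Algebra.trace_ne_zero (ZMod p) L
  rw [DFunLike.ne_iff] at h
  obtain ⟨z, hz⟩ := h
  exact ⟨z, fun hc => hz (by simpa using (mu_eq_one_iff p L z).mp hc)⟩

variable [CharP L p]

noncomputable def frobAlg : L ≃ₐ[ZMod p] L :=
  AlgEquiv.ofRingEquiv (f := frobeniusEquiv L p) (fun c => by
    simp [frobeniusEquiv_apply, frobenius_def, ← map_pow, ZMod.pow_card])

lemma trace_pow_p (x : L) : Algebra.trace (ZMod p) L (x ^ p) = Algebra.trace (ZMod p) L x := by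
  have := Algebra.trace_eq_of_algEquiv (frobAlg p L) x
  simpa [frobAlg, frobeniusEquiv_apply, frobenius_def] using this

lemma trace_pow_pn (n : ℕ) (x : L) :
    Algebra.trace (ZMod p) L (x ^ p ^ n) = Algebra.trace (ZMod p) L x := by
  induction n with
  | zero => simp
  | succ m ih => rw [pow_succ, pow_mul, trace_pow_p, ih]

end basic

section counting
variable {L : Type} [Field L] [Fintype L] [DecidableEq L]

lemma exists_prim_root_card : ∃ ξ : L, IsPrimitiveRoot ξ (Fintype.card L - 1) := by
  obtain ⟨g, hg⟩ := IsCyclic.exists_generator (α := Lˣ)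
  have horder : orderOf g = Fintype.card L - 1 := by
    rw [orderOf_eq_card_of_forall_mem_zpowers hg, Nat.card_eq_fintype_card, Fintype.card_units]
  exact ⟨(g : L), IsPrimitiveRoot.coe_units_iff.mpr (horder ▸ IsPrimitiveRoot.orderOf g)⟩

lemma card_pow_eq_one {d : ℕ} (hd : d ∣ Fintype.card L - 1) (hd0 : 0 < d) :
    (univ.filter fun x : L => x ^ d = 1).card = d := by
  obtain ⟨ξ, hξ⟩ := exists_prim_root_card (L := L)
  obtain ⟨c, hc⟩ := hd
  have hm0 : 0 < Fintype.card L - 1 := by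
    have := Fintype.one_lt_card (α := L)
    omega
  have hprim : IsPrimitiveRoot (ξ ^ c) d := hξ.pow hm0 (by rw [hc, mul_comm])
  have : (univ.filter fun x : L => x ^ d = 1) = nthRootsFinset d (1 : L) := by
    ext x
    simp [Polynomial.mem_nthRootsFinset hd0]
  rw [this, hprim.card_nthRootsFinset]

/-- number of solutions of `u ^ e = 1 ∧ u ^ m = a` for `a` of order `t`. -/
lemma card_pow_eq_target {e m t : ℕ} (he : e ∣ Fintype.card L - 1) (he0 : 0 < e)
    (hm : 0 < m) (ht : 0 < t) {a : L} (ha : IsPrimitiveRoot a t) :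
    (univ.filter fun u : L => u ^ e = 1 ∧ u ^ m = a).card
      = if t ∣ e / Nat.gcd m e then Nat.gcd m e else 0 := by
  set d := Nat.gcd m e with hd
  have hd0 : 0 < d := Nat.gcd_pos_of_pos_left _ hm
  have hde : d ∣ e := Nat.gcd_dvd_right m e
  have hdm : d ∣ m := Nat.gcd_dvd_left m e
  have ha0 : a ≠ 0 := ha.ne_zero ht.ne'
  by_cases hcase : t ∣ e / d
  · rw [if_pos hcase]
    -- a ^ (e / d) = 1
    have hae : a ^ (e / d) = 1 := by
      obtain ⟨c, hc⟩ := hcase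
      rw [hc, pow_mul, ha.pow_eq_one, one_pow]
    have hte : t ∣ e := dvd_trans hcase (Nat.div_dvd_of_dvd hde)
    -- find η, primitive e-th root
    obtain ⟨ξ, hξ⟩ := exists_prim_root_card (L := L)
    have hm0 : 0 < Fintype.card L - 1 := by
      have := Fintype.one_lt_card (α := L); omega
    obtain ⟨c, hc⟩ := id he
    have hη : IsPrimitiveRoot (ξ ^ c) e := hξ.pow hm0 (by rw [hc, mul_comm])
    set η := ξ ^ c with hηdef
    -- a is a power of η
    haveI : NeZero e := ⟨he0.ne'⟩
    obtain ⟨i, hie, hia⟩ := hη.eq_pow_of_pow_eq_one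
      (by
        obtain ⟨j, hj⟩ := hte
        rw [hj, pow_mul, ha.pow_eq_one, one_pow] : a ^ e = 1)
    -- d ∣ i
    have hdi : d ∣ i := by
      have h1 : η ^ (i * (e / d)) = 1 := by
        rw [pow_mul, hia, hae]
      have h2 : e ∣ i * (e / d) := hη.dvd_of_pow_eq_one _ h1
      have h3 : d * (e / d) ∣ i * (e / d) := by
        rwa [Nat.mul_div_cancel' hde]
      exact Nat.dvd_of_mul_dvd_mul_right (Nat.div_pos (Nat.le_of_dvd he0 hde) hd0) h3
    -- construct u0 via Bezout, in the units group
    have hηne : η ≠ 0 := hη.ne_zero he0.ne'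
    set ηu : Lˣ := Units.mk0 η hηne with hηu
    have hηue : ηu ^ e = 1 := by
      ext; push_cast [hηu]; exact hη.pow_eq_one
    set j := i / d with hj
    have hji : d * j = i := Nat.mul_div_cancel' hdi
    set α := Nat.gcdA m e with hα
    set β := Nat.gcdB m e with hβ
    have hbez : (d : ℤ) = m * α + e * β := Nat.gcd_eq_gcd_ab m e
    set u0 : Lˣ := ηu ^ (α * j) with hu0
    have hu0e : u0 ^ (e : ℕ) = 1 := by
      rw [hu0, ← zpow_natCast, ← zpow_mul, mul_comm (α * j) (e : ℤ), zpow_mul, zpow_natCast,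
        hηue, one_zpow]
    have hu0m : ((u0 : L)) ^ m = a := by
      have : u0 ^ (m : ℕ) = ηu ^ ((i : ℤ)) * (ηu ^ (e : ℤ)) ^ (β * (- (j : ℤ))) := by
        rw [hu0, ← zpow_natCast, ← zpow_mul, ← zpow_mul]
        rw [← zpow_add]
        congr 1
        have : (α * j) * (m : ℤ) = (d : ℤ) * j - e * β * j := by
          rw [hbez]; ring
        rw [this]
        have : ((i : ℤ)) = (d : ℤ) * j := by exact_mod_cast hji.symm
        rw [this]; ring
      have h2 : ηu ^ (e : ℤ) = 1 := by rw [zpow_natCast, hηue]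
      rw [h2, one_zpow, mul_one, zpow_natCast] at this
      calc ((u0 : L)) ^ m = ((u0 ^ m : Lˣ) : L) := by push_cast; ring
        _ = ((ηu ^ i : Lˣ) : L) := by rw [this]
        _ = η ^ i := by rw [Units.val_pow_eq_pow_val, hηu, Units.val_mk0]
        _ = a := hia
    have hu0e' : ((u0 : L)) ^ e = 1 := by
      calc ((u0 : L)) ^ e = ((u0 ^ e : Lˣ) : L) := by push_cast; ring
        _ = 1 := by rw [hu0e]; rfl
    -- the solution set is the image of the d-th roots of unity under mul by u0
    have himg : (univ.filter fun u : L => u ^ e = 1 ∧ u ^ m = a)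
        = (univ.filter fun w : L => w ^ d = 1).image (fun w => (u0 : L) * w) := by
      ext x
      simp only [mem_filter, mem_univ, true_and, mem_image]
      constructor
      · rintro ⟨hxe, hxm⟩
        refine ⟨(u0 : L)⁻¹ * x, ?_, by field_simp⟩
        have hw : ∀ l : ℕ, ((u0 : L)⁻¹ * x) ^ l = ((u0 : L) ^ l)⁻¹ * x ^ l := by
          intro l; rw [mul_pow, inv_pow]
        have hwm : ((u0 : L)⁻¹ * x) ^ m = 1 := by
          rw [hw, hu0m, hxm, inv_mul_cancel₀ ha0]
        have hwe : ((u0 : L)⁻¹ * x) ^ e = 1 := by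
          rw [hw, hu0e', hxe, inv_one, one_mul]
        have h1 : orderOf ((u0 : L)⁻¹ * x) ∣ m := orderOf_dvd_of_pow_eq_one hwm
        have h2 : orderOf ((u0 : L)⁻¹ * x) ∣ e := orderOf_dvd_of_pow_eq_one hwe
        have h3 : orderOf ((u0 : L)⁻¹ * x) ∣ d := Nat.dvd_gcd h1 h2
        exact (orderOf_dvd_iff_pow_eq_one.mp h3)
      · rintro ⟨w, hwd, rfl⟩
        constructor
        · rw [mul_pow, hu0e']
          obtain ⟨c', hc'⟩ := hde
          rw [hc', pow_mul, hwd, one_pow, one_mul]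
        · rw [mul_pow, hu0m]
          obtain ⟨c', hc'⟩ := hdm
          rw [hc', pow_mul, hwd, one_pow, mul_one]
    rw [himg, Finset.card_image_of_injective _ (mul_right_injective₀ (Units.ne_zero u0)),
      card_pow_eq_one (dvd_trans hde he) hd0]
  · rw [if_neg hcase]
    rw [Finset.card_eq_zero, Finset.filter_eq_empty_iff]
    rintro u -
    rintro ⟨hue, hum⟩
    apply hcase
    apply ha.dvd_of_pow_eq_one
    have : a ^ (e / d) = u ^ (m * (e / d)) := by rw [pow_mul, hum]
    rw [this]
    have hmd : m * (e / d) = e * (m / d) := by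
      obtain ⟨c1, hc1⟩ := hdm
      obtain ⟨c2, hc2⟩ := hde
      rw [hc1, hc2]
      rw [Nat.mul_div_cancel_left _ hd0, Nat.mul_div_cancel_left _ hd0]
      ring
    rw [hmd, pow_mul, hue, one_pow]

end counting


section charsum
variable (p n : ℕ) [Fact p.Prime] (L : Type) [Field L] [Fintype L] [DecidableEq L]
  [Algebra (ZMod p) L] [CharP L p]

/-- `{x : x ^ q = x}` has `q` elements, where `q = p ^ n` and `card L = q ^ 2`. -/
lemma card_fixed (hn : 0 < n) (hcard : Fintype.card L = (p ^ n) ^ 2) :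
    (univ.filter fun c : L => c ^ p ^ n = c).card = p ^ n := by
  have hp2 : 2 ≤ p := (Fact.out : p.Prime).two_le
  have hq2 : 2 ≤ p ^ n := by
    calc 2 ≤ p := hp2
    _ = p ^ 1 := (pow_one p).symm
    _ ≤ p ^ n := Nat.pow_le_pow_right (by omega) hn
  set q := p ^ n with hq
  have hsplit : (univ.filter fun c : L => c ^ q = c)
      = insert (0 : L) (univ.filter fun c : L => c ^ (q - 1) = 1) := by
    ext x
    simp only [mem_filter, mem_univ, true_and, mem_insert]
    constructor
    · intro hx
      rcases eq_or_ne x 0 with h0 | h0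
      · exact Or.inl h0
      · right
        have : x ^ (q - 1) * x = 1 * x := by
          rw [one_mul, ← pow_succ]
          rw [Nat.sub_add_cancel (by omega)]
          exact hx
        exact mul_right_cancel₀ h0 this
    · rintro (rfl | hx)
      · rw [zero_pow (by omega)]
      · calc x ^ q = x ^ (q - 1) * x := by rw [← pow_succ, Nat.sub_add_cancel (by omega)]
        _ = x := by rw [hx, one_mul]
  have h0notmem : (0 : L) ∉ (univ.filter fun c : L => c ^ (q - 1) = 1) := by
    simp only [mem_filter, mem_univ, true_and]
    rw [zero_pow (by omega)]
    exact zero_ne_one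
  have hdvd : q - 1 ∣ Fintype.card L - 1 := by
    rw [hcard]
    have : q ^ 2 - 1 = (q - 1) * (q + 1) := by
      obtain ⟨r, hr⟩ : ∃ r, q = r + 1 := ⟨q - 1, by omega⟩
      rw [hr]
      have : (r + 1) ^ 2 = r * r + 2 * r + 1 := by ring
      rw [this]
      simp only [Nat.add_sub_cancel]
      ring
    rw [this]
    exact Dvd.intro _ rfl
  rw [hsplit, Finset.card_insert_of_notMem h0notmem, card_pow_eq_one hdvd (by omega)]
  omega

/-- `{y : y ^ q = -y}` has `q` elements. -/
lemma card_anti (hn : 0 < n) (hp : Odd p) (hcard : Fintype.card L = (p ^ n) ^ 2) :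
    (univ.filter fun y : L => y ^ p ^ n = -y).card = p ^ n := by
  have hp2 : 2 ≤ p := (Fact.out : p.Prime).two_le
  have hp3 : 3 ≤ p := by
    rcases hp with ⟨m, hm⟩; omega
  have hq3 : 3 ≤ p ^ n := by
    calc 3 ≤ p := hp3
    _ = p ^ 1 := (pow_one p).symm
    _ ≤ p ^ n := Nat.pow_le_pow_right (by omega) hn
  set q := p ^ n with hq
  have hqodd : Odd q := hp.pow
  have hM : Fintype.card L - 1 = (q - 1) * (q + 1) := by
    rw [hcard]
    obtain ⟨r, hr⟩ : ∃ r, q = r + 1 := ⟨q - 1, by omega⟩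
    rw [hr]
    have : (r + 1) ^ 2 = r * r + 2 * r + 1 := by ring
    rw [this]
    simp only [Nat.add_sub_cancel]
    ring
  have hM0 : 0 < Fintype.card L - 1 := by
    have := Fintype.one_lt_card (α := L); omega
  -- find y0 with y0 ^ (q-1) = -1
  obtain ⟨ξ, hξ⟩ := exists_prim_root_card (L := L)
  have hMeven : 2 ∣ Fintype.card L - 1 := by
    rw [hM]
    exact Dvd.dvd.mul_left ⟨(q+1)/2, by obtain ⟨m, hm⟩ := hqodd; omega⟩ _
  have hneg : ξ ^ ((Fintype.card L - 1) / 2) = -1 := by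
    have h2 : IsPrimitiveRoot (ξ ^ ((Fintype.card L - 1) / 2)) 2 :=
      hξ.pow hM0 (by omega)
    exact h2.eq_neg_one_of_two_right
  set y0 : L := ξ ^ ((q + 1) / 2) with hy0
  have hy0pow : y0 ^ (q - 1) = -1 := by
    rw [hy0, ← pow_mul, ← hneg]
    congr 1
    rw [hM]
    obtain ⟨m, hm⟩ := hqodd
    have e1 : (q + 1) / 2 = m + 1 := by omega
    have e2 : q - 1 = 2 * m := by omega
    have e3 : q + 1 = 2 * m + 2 := by omega
    rw [e1, e2, e3, show (2 * m) * (2 * m + 2) = 2 * ((m + 1) * (2 * m)) from by ring,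
      Nat.mul_div_cancel_left _ (by norm_num)]
  have hy0ne : y0 ≠ 0 := pow_ne_zero _ (hξ.ne_zero (by omega))
  have hsplit : (univ.filter fun y : L => y ^ q = -y)
      = insert (0 : L) ((univ.filter fun c : L => c ^ (q - 1) = 1).image (fun c => y0 * c)) := by
    ext x
    simp only [mem_filter, mem_univ, true_and, mem_insert, mem_image]
    constructor
    · intro hx
      rcases eq_or_ne x 0 with h0 | h0
      · exact Or.inl h0
      · right
        refine ⟨y0⁻¹ * x, ?_, by field_simp⟩
        rw [mul_pow, inv_pow, hy0pow]
        have hx1 : x ^ (q - 1) = -1 := by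
          have : x ^ (q - 1) * x = (-1) * x := by
            rw [← pow_succ, Nat.sub_add_cancel (by omega), hx]; ring
          exact mul_right_cancel₀ h0 this
        rw [hx1]
        norm_num
    · rintro (rfl | ⟨c, hc, rfl⟩)
      · rw [zero_pow (by omega)]; ring
      · have : (y0 * c) ^ q = (y0 * c) ^ (q - 1) * (y0 * c) := by
          rw [← pow_succ, Nat.sub_add_cancel (by omega)]
        rw [this, mul_pow, hy0pow, hc, mul_one]
        ring
  have h0notmem : (0 : L) ∉ ((univ.filter fun c : L => c ^ (q - 1) = 1).image (fun c => y0 * c)) := by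
    intro hmem
    rw [mem_image] at hmem
    obtain ⟨c, hc, hc0⟩ := hmem
    rw [mem_filter] at hc
    rcases mul_eq_zero.mp hc0 with h | h
    · exact hy0ne h
    · rw [h, zero_pow (by omega)] at hc
      exact zero_ne_one hc.2
  rw [hsplit, Finset.card_insert_of_notMem h0notmem,
    Finset.card_image_of_injective _ (mul_right_injective₀ hy0ne),
    card_pow_eq_one (by rw [hM]; exact Dvd.intro _ rfl) (by omega)]
  omega


lemma charSum (hn : 0 < n) (hp : Odd p) (hcard : Fintype.card L = (p ^ n) ^ 2) (y : L) :
    ∑ c ∈ univ.filter (fun c : L => c ^ p ^ n = c), mu p L (c * y)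
      = if y ^ p ^ n = -y then ((p : ℂ) ^ n) else 0 := by
  classical
  have hp2 : 2 ≤ p := (Fact.out : p.Prime).two_le
  set q := p ^ n with hq
  have hq2 : 2 ≤ q := by
    calc 2 ≤ p := hp2
    _ = p ^ 1 := (pow_one p).symm
    _ ≤ p ^ n := Nat.pow_le_pow_right (by omega) hn
  set KF := univ.filter (fun c : L => c ^ q = c) with hKF
  have hmem : ∀ c : L, c ∈ KF ↔ c ^ q = c := by
    intro c; rw [hKF, mem_filter]; simp
  have h0mem : (0 : L) ∈ KF := by rw [hmem, zero_pow (by omega)]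
  have hadd : ∀ c1 c2 : L, c1 ∈ KF → c2 ∈ KF → c1 + c2 ∈ KF := by
    intro c1 c2 h1 h2
    rw [hmem] at h1 h2 ⊢
    rw [hq, add_pow_char_pow, ← hq, h1, h2]
  have hsub : ∀ c1 c2 : L, c1 ∈ KF → c2 ∈ KF → c1 - c2 ∈ KF := by
    intro c1 c2 h1 h2
    rw [hmem] at h1 h2 ⊢
    rw [hq, sub_pow_char_pow, ← hq, h1, h2]
  -- the shift identity
  have hshift : ∀ (z : L) (c0 : L), c0 ∈ KF →
      mu p L (c0 * z) * ∑ c ∈ KF, mu p L (c * z) = ∑ c ∈ KF, mu p L (c * z) := by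
    intro z c0 hc0
    rw [Finset.mul_sum]
    have : ∀ c ∈ KF, mu p L (c0 * z) * mu p L (c * z) = mu p L ((c0 + c) * z) := by
      intro c _
      rw [add_mul, AddChar.map_add_eq_mul]
    rw [Finset.sum_congr rfl this]
    apply Finset.sum_nbij' (fun c => c0 + c) (fun c => c - c0)
    · intro c hc; exact hadd _ _ hc0 hc
    · intro c hc; exact hsub _ _ hc hc0
    · intro c _; ring
    · intro c _; ring
    · intro c _; rfl
  have hStepB : ∀ z : L, (∃ c0 ∈ KF, mu p L (c0 * z) ≠ 1) →
      ∑ c ∈ KF, mu p L (c * z) = 0 := by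
    rintro z ⟨c0, hc0, hne⟩
    have h := hshift z c0 hc0
    by_contra hS
    exact hne (mul_right_cancel₀ hS (by rw [h, one_mul]))
  have hStepA : ∀ z : L, (∀ c ∈ KF, mu p L (c * z) = 1) →
      ∑ c ∈ KF, mu p L (c * z) = (q : ℂ) := by
    intro z hz
    rw [Finset.sum_congr rfl hz, Finset.sum_const, nsmul_eq_mul, mul_one]
    rw [hKF, card_fixed p n L hn hcard]
  -- anti-fixed implies trivial
  have hStepC : ∀ z : L, z ^ q = -z → ∀ c ∈ KF, mu p L (c * z) = 1 := by
    intro z hz c hc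
    rw [hmem] at hc
    rw [mu_eq_one_iff]
    have hpow : (c * z) ^ q = -(c * z) := by
      rw [mul_pow, hz, hc]; ring
    have htr := trace_pow_pn p L n (c * z)
    rw [← hq, hpow, map_neg] at htr
    have h2 : (2 : ZMod p) * Algebra.trace (ZMod p) L (c * z) = 0 := by
      linear_combination -htr
    have h2ne : (2 : ZMod p) ≠ 0 := by
      intro hcon
      have : (p : ℕ) ∣ 2 := by
        rwa [← Nat.cast_ofNat, ZMod.natCast_eq_zero_iff] at hcon
      have hpe : p = 2 := (Nat.prime_dvd_prime_iff_eq Fact.out Nat.prime_two).mp this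
      rcases hp with ⟨m, hm⟩; omega
    exact (mul_eq_zero.mp h2).resolve_left h2ne
  -- total sum over all y
  have hfull : ∀ c : L, c ≠ 0 → ∑ w : L, mu p L (c * w) = 0 := by
    intro c hc
    have h1 : ∑ w : L, mu p L (c * w) = ∑ w : L, mu p L w :=
      Fintype.sum_equiv (Equiv.mulLeft₀ c hc) _ _ (fun w => rfl)
    rw [h1]
    obtain ⟨z, hz⟩ := exists_mu_ne_one p L
    have h2 : mu p L z * ∑ w : L, mu p L w = ∑ w : L, mu p L w := by
      rw [Finset.mul_sum]
      have : ∀ w ∈ univ, mu p L z * mu p L w = mu p L (z + w) := by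
        intro w _; rw [AddChar.map_add_eq_mul]
      rw [Finset.sum_congr rfl this]
      exact Fintype.sum_equiv (Equiv.addLeft z) _ _ (fun w => rfl)
    by_contra hS
    exact hz (mul_right_cancel₀ hS (by rw [h2, one_mul]))
  have htotal : ∑ z : L, ∑ c ∈ KF, mu p L (c * z) = ((q : ℂ)) ^ 2 := by
    rw [Finset.sum_comm]
    rw [Finset.sum_eq_single_of_mem 0 h0mem (fun c _ hc => hfull c hc)]
    simp only [zero_mul, AddChar.map_zero_eq_one]
    rw [Finset.sum_const, nsmul_eq_mul, mul_one, Finset.card_univ, hcard]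
    push_cast
    ring
  -- the set of y with trivial restricted character
  set T := univ.filter (fun z : L => ∀ c ∈ KF, mu p L (c * z) = 1) with hT
  have hsum_ite : ∀ z : L, ∑ c ∈ KF, mu p L (c * z) =
      if (∀ c ∈ KF, mu p L (c * z) = 1) then (q : ℂ) else 0 := by
    intro z
    split_ifs with h
    · exact hStepA z h
    · push_neg at h
      exact hStepB z (by tauto)
  have hTcard : T.card = q := by
    have h1 : ∑ z : L, ∑ c ∈ KF, mu p L (c * z) = (T.card : ℂ) * q := by
      rw [Finset.sum_congr rfl (fun z _ => hsum_ite z)]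
      rw [Finset.sum_ite, Finset.sum_const, Finset.sum_const_zero, add_zero, nsmul_eq_mul]
    rw [htotal] at h1
    have hq0 : (q : ℂ) ≠ 0 := Nat.cast_ne_zero.mpr (by omega)
    have h2 : (T.card : ℂ) * (q : ℂ) = (q : ℂ) * (q : ℂ) := by rw [← h1]; ring
    have : (T.card : ℂ) = (q : ℂ) := mul_right_cancel₀ hq0 h2
    exact_mod_cast this
  have hZT : univ.filter (fun z : L => z ^ q = -z) = T := by
    apply Finset.eq_of_subset_of_card_le
    · intro z hz
      rw [mem_filter] at hz
      rw [hT, mem_filter]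
      exact ⟨mem_univ z, hStepC z hz.2⟩
    · rw [hTcard, card_anti p n L hn hp hcard]
  -- conclude
  rw [hsum_ite y]
  by_cases hy : y ^ q = -y
  · rw [if_pos (hStepC y hy), if_pos hy, hq]
    push_cast
    ring
  · rw [if_neg hy, if_neg]
    intro hcon
    apply hy
    have : y ∈ T := by rw [hT, mem_filter]; exact ⟨mem_univ y, hcon⟩
    rw [← hZT, mem_filter] at this
    exact this.2

end charsum

end WeilAux


open WeilAux Finset Polynomial in
/-- for `ζ_t` a primitive `t`-th root of unity in `L` with `t ∣ p^n + 1`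
and `t > 1`, `W_{L,s}(ζ_t) = p^n(d₁δ_{1,t} + d₂δ_{2,t} - 1)`, where `δ_{i,t} = 1` if
`t ∣ (p^n+1)/dᵢ` and `0` otherwise. -/
theorem weil_sum_at_root_of_unity (p n : ℕ) [Fact p.Prime] (hn : 0 < n)
    (F L : Type) [Field F] [Fintype F] [Field L] [Fintype L]
    [Algebra (ZMod p) L] [Algebra F L]
    (hF : Fintype.card F = p ^ n) (hL : Fintype.card L = p ^ (2 * n))
    (k s : ℕ) (hsk : s = 1 + k * (p ^ n - 1)) (hs : Nat.Coprime s (p ^ (2 * n) - 1))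
    (hp : Odd p) (hk2 : 2 ≤ k) (hkp : k ≤ p ^ n)
    (t : ℕ) (ht1 : 1 < t) (htdvd : t ∣ p ^ n + 1) (ζ : L) (hζ : IsPrimitiveRoot ζ t) :
    weilSum p L s ζ =
      (p : ℂ) ^ n *
        ((if t ∣ (p ^ n + 1) / Nat.gcd k (p ^ n + 1) then (Nat.gcd k (p ^ n + 1) : ℂ) else 0) +
         (if t ∣ (p ^ n + 1) / Nat.gcd (k - 1) (p ^ n + 1) then
            (Nat.gcd (k - 1) (p ^ n + 1) : ℂ) else 0) - 1) := by
  classical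
  haveI : CharP L p := charP_of_injective_algebraMap (algebraMap (ZMod p) L).injective p
  have hp2 : 2 ≤ p := (Fact.out : p.Prime).two_le
  have hp3 : 3 ≤ p := by rcases hp with ⟨m, hm⟩; omega
  set q := p ^ n with hq
  have hq3 : 3 ≤ q := by
    calc 3 ≤ p := hp3
    _ = p ^ 1 := (pow_one p).symm
    _ ≤ p ^ n := Nat.pow_le_pow_right (by omega) hn
  have hqodd : Odd q := hp.pow
  have hcard : Fintype.card L = q ^ 2 := by
    rw [hL, hq, ← pow_mul, two_mul, mul_two]
  have hq2n : q ^ 2 = p ^ (2 * n) := by rw [hq, ← pow_mul, two_mul, mul_two]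
  have hM : Fintype.card L - 1 = (q - 1) * (q + 1) := by
    rw [hcard]
    obtain ⟨r, hr⟩ : ∃ r, q = r + 1 := ⟨q - 1, by omega⟩
    rw [hr]
    have : (r + 1) ^ 2 = r * r + 2 * r + 1 := by ring
    rw [this]
    simp only [Nat.add_sub_cancel]
    ring
  have hM0 : 0 < Fintype.card L - 1 := by
    have := Fintype.one_lt_card (α := L); omega
  have hζ0 : ζ ≠ 0 := hζ.ne_zero (by omega)
  have hζq : ζ ^ (q + 1) = 1 := by
    obtain ⟨c, hc⟩ := htdvd
    rw [hc, pow_mul, hζ.pow_eq_one, one_pow]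
  have hζζ : ζ ^ q * ζ = 1 := by rw [← pow_succ]; exact hζq
  -- gcd(2k-1, q+1) = 1
  have hgcd1 : Nat.gcd (2 * k - 1) (q + 1) = 1 := by
    set G := Nat.gcd (2 * k - 1) (q + 1) with hG
    have hG1 : G ∣ 2 * k - 1 := Nat.gcd_dvd_left _ _
    have hG2 : G ∣ q + 1 := Nat.gcd_dvd_right _ _
    have hks : s = k * (q + 1) - (2 * k - 1) := by
      rw [hsk]
      have e1 : q + 1 = (q - 1) + 2 := by omega
      rw [e1, Nat.mul_add]
      set A := k * (q - 1)
      omega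
    have hGs : G ∣ s := by
      rw [hks]
      exact Nat.dvd_sub (hG2.mul_left k) hG1
    have hGq : G ∣ p ^ (2 * n) - 1 := by
      refine hG2.trans ?_
      rw [← hq2n]
      have : q ^ 2 - 1 = (q + 1) * (q - 1) := by rw [← hcard, hM, Nat.mul_comm]
      rw [this]
      exact Dvd.intro _ rfl
    have : G ∣ 1 := by
      rw [← hs]
      exact Nat.dvd_gcd hGs hGq
    exact Nat.dvd_one.mp (hs ▸ this)
  -- basic sum setup
  have hs0 : s ≠ 0 := by rw [hsk]; omega
  have hμ : weilSum p L s ζ = ∑ x : L, mu p L (x ^ s - ζ * x) := by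
    unfold weilSum
    exact Finset.sum_congr rfl (fun x _ => (mu_apply p L _).symm)
  set U := univ.filter (fun u : L => u ^ (q + 1) = 1) with hU
  have hqdvd : q + 1 ∣ Fintype.card L - 1 := ⟨q - 1, by rw [hM]; ring⟩
  have hUcard : U.card = q + 1 := card_pow_eq_one hqdvd (by omega)
  have hsplit : ∑ x : L, mu p L (x ^ s - ζ * x)
      = 1 + ∑ x ∈ univ.erase 0, mu p L (x ^ s - ζ * x) := by
    rw [← Finset.add_sum_erase univ _ (mem_univ (0 : L))]
    congr 1
    rw [zero_pow hs0, mul_zero, sub_zero, AddChar.map_zero_eq_one]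
  have hmap : ∀ x ∈ univ.erase (0 : L), x ^ (q - 1) ∈ U := by
    intro x hx
    rw [mem_erase] at hx
    rw [hU, mem_filter]
    refine ⟨mem_univ _, ?_⟩
    rw [← pow_mul, ← hM, FiniteField.pow_card_sub_one_eq_one x hx.1]
  have hfib : ∑ x ∈ univ.erase (0 : L), mu p L (x ^ s - ζ * x)
      = ∑ u ∈ U, ∑ x ∈ (univ.erase 0).filter (fun x => x ^ (q - 1) = u),
          mu p L (x ^ s - ζ * x) :=
    (Finset.sum_fiberwise_of_maps_to hmap _).symm
  -- the inner sum for each u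
  have hinner : ∀ u ∈ U, ∑ x ∈ (univ.erase 0).filter (fun x => x ^ (q - 1) = u),
      mu p L (x ^ s - ζ * x)
      = (if u ^ k = ζ ∨ ζ * u ^ (k - 1) = 1 then (q : ℂ) else 0) - 1 := by
    intro u hu
    rw [hU, mem_filter] at hu
    have huq : u ^ (q + 1) = 1 := hu.2
    have hu0 : u ≠ 0 := by
      intro h0; rw [h0, zero_pow (by omega)] at huq; exact zero_ne_one huq
    have huu : u ^ q * u = 1 := by rw [← pow_succ]; exact huq
    obtain ⟨ξ, hξ⟩ := exists_prim_root_card (L := L)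
    haveI : NeZero (Fintype.card L - 1) := ⟨by omega⟩
    have huM : u ^ (Fintype.card L - 1) = 1 := by
      rw [hM, mul_comm, pow_mul, huq, one_pow]
    obtain ⟨i, hi, hiu⟩ := hξ.eq_pow_of_pow_eq_one huM
    have hdvd_i : (q - 1) ∣ i := by
      have h1 : ξ ^ (i * (q + 1)) = 1 := by rw [pow_mul, hiu, huq]
      have h2 : (q - 1) * (q + 1) ∣ i * (q + 1) := by
        rw [← hM]; exact hξ.dvd_of_pow_eq_one _ h1
      exact Nat.dvd_of_mul_dvd_mul_right (by omega) h2
    set x_u := ξ ^ (i / (q - 1)) with hxud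
    have hxu : x_u ^ (q - 1) = u := by
      rw [hxud, ← pow_mul, Nat.div_mul_cancel hdvd_i, hiu]
    have hxu0 : x_u ≠ 0 := pow_ne_zero _ (hξ.ne_zero (by omega))
    have hxuq : x_u ^ q = u * x_u := by
      calc x_u ^ q = x_u ^ (q - 1) * x_u := by
            rw [← pow_succ, Nat.sub_add_cancel (by omega)]
      _ = u * x_u := by rw [hxu]
    have himg : (univ.erase 0).filter (fun x => x ^ (q - 1) = u)
        = (univ.filter (fun c : L => c ^ (q - 1) = 1)).image (fun c => x_u * c) := by
      ext x
      simp only [mem_filter, mem_erase, mem_univ, true_and, and_true, mem_image]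
      constructor
      · rintro ⟨hx0, hxq⟩
        refine ⟨x_u⁻¹ * x, ?_, by field_simp⟩
        rw [mul_pow, inv_pow, hxu, hxq, inv_mul_cancel₀ hu0]
      · rintro ⟨c, hc, rfl⟩
        have hc0 : c ≠ 0 := by
          intro h0; rw [h0, zero_pow (by omega)] at hc; exact zero_ne_one hc
        refine ⟨mul_ne_zero hxu0 hc0, ?_⟩
        rw [mul_pow, hxu, hc, mul_one]
    rw [himg, Finset.sum_image (fun a _ b _ h => mul_left_cancel₀ hxu0 h)]
    set b := x_u * (u ^ k - ζ) with hb
    have hterm : ∀ c ∈ univ.filter (fun c : L => c ^ (q - 1) = 1),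
        mu p L ((x_u * c) ^ s - ζ * (x_u * c)) = mu p L (c * b) := by
      intro c hc
      rw [mem_filter] at hc
      have hxc : (x_u * c) ^ (q - 1) = u := by
        rw [mul_pow, hxu, hc.2, mul_one]
      have hpow : (x_u * c) ^ s = (x_u * c) * u ^ k := by
        rw [hsk, pow_add, pow_one, mul_comm k, pow_mul, hxc]
      rw [hpow, hb]
      congr 1
      ring
    rw [Finset.sum_congr rfl hterm]
    -- relate to the full subfield sum
    have hKFsplit : univ.filter (fun c : L => c ^ q = c)
        = insert (0 : L) (univ.filter (fun c : L => c ^ (q - 1) = 1)) := by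
      ext x
      simp only [mem_filter, mem_univ, true_and, mem_insert]
      constructor
      · intro hx
        rcases eq_or_ne x 0 with h0 | h0
        · exact Or.inl h0
        · right
          have : x ^ (q - 1) * x = 1 * x := by
            rw [one_mul, ← pow_succ, Nat.sub_add_cancel (by omega)]
            exact hx
          exact mul_right_cancel₀ h0 this
      · rintro (rfl | hx)
        · rw [zero_pow (by omega)]
        · calc x ^ q = x ^ (q - 1) * x := by
                rw [← pow_succ, Nat.sub_add_cancel (by omega)]
          _ = x := by rw [hx, one_mul]
    have h0notmem : (0 : L) ∉ univ.filter (fun c : L => c ^ (q - 1) = 1) := by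
      simp only [mem_filter, mem_univ, true_and]
      rw [zero_pow (by omega)]
      exact zero_ne_one
    have hsum1 : ∑ c ∈ univ.filter (fun c : L => c ^ (q - 1) = 1), mu p L (c * b)
        = (∑ c ∈ univ.filter (fun c : L => c ^ q = c), mu p L (c * b)) - 1 := by
      rw [hKFsplit, Finset.sum_insert h0notmem, zero_mul, AddChar.map_zero_eq_one]
      ring
    rw [hsum1, charSum p n L hn hp hcard b]
    congr 1
    -- condition equivalence (goal: the two ite's agree)
    have hbq : b ^ q = (u * x_u) * ((u ^ q) ^ k - ζ ^ q) := by
      rw [hb, mul_pow, hq, sub_pow_char_pow, ← hq, hxuq, pow_right_comm]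
    have hABkey : u ^ k * (u ^ q) ^ k = 1 := by
      rw [← mul_pow, mul_comm, huu, one_pow]
    have hident : u ^ k * ζ * (b ^ q + b) = x_u * ((ζ - u ^ k) * (u - u ^ k * ζ)) := by
      rw [hbq, hb]
      linear_combination (u * x_u * ζ) * hABkey - (u * x_u * u ^ k) * hζζ
    have hkk : u ^ (k - 1) * u = u ^ k := by
      rw [← pow_succ, Nat.sub_add_cancel (by omega)]
    have hcond : (b ^ q = -b) ↔ (u ^ k = ζ ∨ ζ * u ^ (k - 1) = 1) := by
      constructor
      · intro h
        have h0 : x_u * ((ζ - u ^ k) * (u - u ^ k * ζ)) = 0 := by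
          rw [← hident, h]; ring
        rcases mul_eq_zero.mp h0 with h1 | h1
        · exact absurd h1 hxu0
        rcases mul_eq_zero.mp h1 with h2 | h2
        · exact Or.inl (by linear_combination -h2)
        · right
          have h3 : u ^ (k - 1) * ζ * u = 1 * u := by
            rw [one_mul, ← sub_eq_zero]
            calc u ^ (k - 1) * ζ * u - u = u ^ k * ζ - u := by
                  rw [← hkk]; ring
            _ = 0 := by linear_combination -h2
          have := mul_right_cancel₀ hu0 h3
          linear_combination this
      · intro h
        have h0 : (ζ - u ^ k) * (u - u ^ k * ζ) = 0 := by
          rcases h with h1 | h1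
          · rw [h1]; ring
          · apply mul_eq_zero_of_right
            rw [← hkk]
            linear_combination (-u) * h1
        have h2 : u ^ k * ζ * (b ^ q + b) = 0 := by
          rw [hident, h0, mul_zero]
        have h3 : b ^ q + b = 0 := by
          have hk0 : u ^ k * ζ ≠ 0 := mul_ne_zero (pow_ne_zero _ hu0) hζ0
          rcases mul_eq_zero.mp h2 with h | h
          · exact absurd h hk0
          · exact h
        linear_combination h3
    rw [hcond]
    norm_cast
  -- assemble
  rw [hμ, hsplit, hfib, Finset.sum_congr rfl hinner, Finset.sum_sub_distrib,
    Finset.sum_const, hUcard, nsmul_eq_mul, mul_one, Finset.sum_ite,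
    Finset.sum_const_zero, add_zero, Finset.sum_const, nsmul_eq_mul]
  have hfilter : U.filter (fun u => u ^ k = ζ ∨ ζ * u ^ (k - 1) = 1)
      = (univ.filter fun u : L => u ^ (q + 1) = 1 ∧ u ^ k = ζ)
        ∪ (univ.filter fun u : L => u ^ (q + 1) = 1 ∧ u ^ (k - 1) = ζ⁻¹) := by
    rw [hU, Finset.filter_filter]
    ext u
    simp only [mem_filter, mem_univ, true_and, mem_union]
    constructor
    · rintro ⟨h1, (h2 | h2)⟩
      · exact Or.inl ⟨h1, h2⟩
      · exact Or.inr ⟨h1, eq_inv_of_mul_eq_one_right (by linear_combination h2)⟩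
    · rintro (⟨h1, h2⟩ | ⟨h1, h2⟩)
      · exact ⟨h1, Or.inl h2⟩
      · refine ⟨h1, Or.inr ?_⟩
        rw [h2, mul_inv_cancel₀ hζ0]
  have hdisj : Disjoint (univ.filter fun u : L => u ^ (q + 1) = 1 ∧ u ^ k = ζ)
      (univ.filter fun u : L => u ^ (q + 1) = 1 ∧ u ^ (k - 1) = ζ⁻¹) := by
    rw [Finset.disjoint_left]
    rintro u hu1 hu2
    rw [mem_filter] at hu1 hu2
    have h21 : u ^ (2 * k - 1) = 1 := by
      have h := congrArg₂ (· * ·) hu1.2.2 hu2.2.2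
      rw [← pow_add, mul_inv_cancel₀ hζ0] at h
      rw [show 2 * k - 1 = k + (k - 1) from by omega]
      exact h
    have ho1 : orderOf u ∣ 2 * k - 1 := orderOf_dvd_of_pow_eq_one h21
    have ho2 : orderOf u ∣ q + 1 := orderOf_dvd_of_pow_eq_one hu1.2.1
    have hou : orderOf u ∣ 1 := hgcd1 ▸ Nat.dvd_gcd ho1 ho2
    have hu_one : u = 1 := orderOf_eq_one_iff.mp (Nat.dvd_one.mp hou)
    have hζ1 : ζ = 1 := by rw [← hu1.2.2, hu_one, one_pow]
    have : t ∣ 1 := hζ.dvd_of_pow_eq_one 1 (by rw [pow_one, hζ1])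
    exact absurd (Nat.dvd_one.mp this) (by omega)
  rw [hfilter, Finset.card_union_of_disjoint hdisj,
    card_pow_eq_target hqdvd (by omega) (by omega) (by omega) hζ,
    card_pow_eq_target hqdvd (by omega) (by omega) (by omega) hζ.inv]
  rw [hq]
  split_ifs <;> push_cast <;> ring
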